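/- Let μ > 0 and let a, b ∈ ℝ with |a − b| ≤ s for some s > 0. Set σ = s/μ. Then for every ε ≥ 0 and every measurable set A ⊆ ℝ, N(a, σ²)(A) ≤ e^ε · N(b, σ²)(A) + δ(ε), where δ(ε) = Φ(−ε/μ + μ/2) − e^ε Φ(−ε/μ − μ/2). That is, the Gaussian output perturbation mechanism with noise standard deviation sens(θ)/μ is (ε, δ(ε))-DP for every ε ≥ 0. -/

import Mathlib

open MeasureTheory ProbabilityTheory Set

/-- Standard normal cumulative distribution function Φ. -/
noncomputable def stdGaussCDF (x : ℝ) : ℝ := ((gaussianReal 0 1) (Set.Iic x)).toReal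

lemma stdGaussCDF_eq_integral (x : ℝ) :
    stdGaussCDF x = ∫ t in Iic x, gaussianPDFReal 0 1 t := by
  rw [stdGaussCDF, gaussianReal_apply_eq_integral 0 one_ne_zero,
    ENNReal.toReal_ofReal]
  exact setIntegral_nonneg measurableSet_Iic fun t _ => gaussianPDFReal_nonneg 0 1 t

lemma hasDerivAt_stdGaussCDF (x : ℝ) :
    HasDerivAt stdGaussCDF (gaussianPDFReal 0 1 x) x := by
  have hcont : Continuous (gaussianPDFReal 0 1) := by
    rw [gaussianPDFReal_def]
    fun_prop
  have h := (hcont.integral_hasStrictDerivAt 0 x).hasDerivAt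
  have heq : ∀ y, stdGaussCDF y = (∫ t in (0:ℝ)..y, gaussianPDFReal 0 1 t) + stdGaussCDF 0 := by
    intro y
    rw [stdGaussCDF_eq_integral, stdGaussCDF_eq_integral,
      ← intervalIntegral.integral_Iic_sub_Iic ((integrable_gaussianPDFReal 0 1).integrableOn)
        ((integrable_gaussianPDFReal 0 1).integrableOn)]
    ring
  have : stdGaussCDF = fun y => (∫ t in (0:ℝ)..y, gaussianPDFReal 0 1 t) + stdGaussCDF 0 :=
    funext heq
  rw [this]
  exact h.add_const _

lemma toNNReal_sq_ne_zero {σ : ℝ} (hσ : 0 < σ) : (Real.toNNReal (σ ^ 2)) ≠ 0 := by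
  simp only [ne_eq, Real.toNNReal_eq_zero, not_le]
  positivity

lemma gaussianReal_eq_map (m σ : ℝ) (hσ : 0 < σ) :
    gaussianReal m (Real.toNNReal (σ ^ 2)) =
      (gaussianReal 0 1).map (fun y => σ * y + m) := by
  have h1 : (gaussianReal 0 1).map (fun y => σ * y) = gaussianReal 0 (Real.toNNReal (σ ^ 2)) := by
    have := gaussianReal_map_const_mul (μ := 0) (v := 1) σ
    simp only [mul_zero, mul_one] at this
    convert this using 3
    ext
    simp [Real.coe_toNNReal _ (sq_nonneg σ)]
  have h2 : (fun y => σ * y + m) = (fun y => y + m) ∘ (fun y => σ * y) := rfl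
  rw [h2, ← Measure.map_map (by fun_prop) (by fun_prop), h1, gaussianReal_map_add_const]
  simp

lemma gauss_Iic (m σ T : ℝ) (hσ : 0 < σ) :
    ((gaussianReal m (Real.toNNReal (σ ^ 2))) (Iic T)).toReal = stdGaussCDF ((T - m) / σ) := by
  rw [gaussianReal_eq_map m σ hσ, Measure.map_apply (by fun_prop) measurableSet_Iic]
  congr 2
  ext y
  simp only [mem_preimage, mem_Iic]
  rw [le_div_iff₀ hσ]
  constructor <;> intro h <;> nlinarith

lemma gauss_Ici (m σ T : ℝ) (hσ : 0 < σ) :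
    ((gaussianReal m (Real.toNNReal (σ ^ 2))) (Ici T)).toReal = stdGaussCDF ((m - T) / σ) := by
  have hv := toNNReal_sq_ne_zero hσ
  have hsing : (gaussianReal m (Real.toNNReal (σ ^ 2))) {T} = 0 :=
    gaussianReal_absolutelyContinuous m hv (measure_singleton T)
  have h1 : (gaussianReal m (Real.toNNReal (σ ^ 2))) (Ici T)
      = (gaussianReal m (Real.toNNReal (σ ^ 2))) (Iic T)ᶜ := by
    rw [compl_Iic]
    exact (measure_congr (Ioi_ae_eq_Ici' hsing)).symm
  rw [h1, prob_compl_eq_one_sub measurableSet_Iic, ENNReal.toReal_sub_of_le prob_le_one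
    ENNReal.one_ne_top, ENNReal.toReal_one, gauss_Iic m σ T hσ]
  -- need: 1 - Φ((T-m)/σ) = Φ((m-T)/σ)
  have hneg : ∀ x : ℝ, stdGaussCDF (-x) = 1 - stdGaussCDF x := by
    intro x
    have hmap : (gaussianReal 0 1).map (fun y : ℝ => -y) = gaussianReal 0 1 := by
      have := gaussianReal_map_const_mul (μ := 0) (v := 1) (-1)
      simp only [mul_zero, neg_one_mul] at this
      convert this using 3
      ext
      simp
    have h1 : (gaussianReal 0 1) (Iic (-x)) = (gaussianReal 0 1) (Ici x) := by
      conv_lhs => rw [← hmap]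
      rw [Measure.map_apply (by fun_prop) measurableSet_Iic]
      congr 1
      ext y
      simp only [mem_preimage, mem_Iic, mem_Ici]
      constructor <;> intro h <;> linarith
    have hsing0 : (gaussianReal 0 1) {x} = 0 :=
      gaussianReal_absolutelyContinuous 0 one_ne_zero (measure_singleton x)
    have h2 : (gaussianReal 0 1) (Ici x) = (gaussianReal 0 1) (Iic x)ᶜ := by
      rw [compl_Iic]
      exact (measure_congr (Ioi_ae_eq_Ici' hsing0)).symm
    rw [stdGaussCDF, stdGaussCDF, h1, h2, prob_compl_eq_one_sub measurableSet_Iic,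
      ENNReal.toReal_sub_of_le prob_le_one ENNReal.one_ne_top]
    simp
  have := hneg ((T - m) / σ)
  have harg : -((T - m) / σ) = (m - T) / σ := by ring
  rw [harg] at this
  linarith

lemma gauss_toReal {σ : ℝ} (hσ : 0 < σ) (m : ℝ) (A : Set ℝ) (hA : MeasurableSet A) :
    ((gaussianReal m (Real.toNNReal (σ ^ 2))) A).toReal
      = ∫ x in A, gaussianPDFReal m (Real.toNNReal (σ ^ 2)) x := by
  have hv : (Real.toNNReal (σ ^ 2)) ≠ 0 := by
    simp only [ne_eq, Real.toNNReal_eq_zero, not_le]; positivity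
  rw [gaussianReal_apply_eq_integral m hv, ENNReal.toReal_ofReal]
  exact setIntegral_nonneg hA fun t _ => gaussianPDFReal_nonneg _ _ t

lemma core_ineq {σ : ℝ} (hσ : 0 < σ) (ε a b : ℝ) (A : Set ℝ) (hA : MeasurableSet A) :
    ((gaussianReal a (Real.toNNReal (σ ^ 2))) A).toReal ≤
      Real.exp ε * ((gaussianReal b (Real.toNNReal (σ ^ 2))) A).toReal +
      (((gaussianReal a (Real.toNNReal (σ ^ 2))) {x : ℝ | Real.exp ε * gaussianPDFReal b (Real.toNNReal (σ ^ 2)) x ≤ gaussianPDFReal a (Real.toNNReal (σ ^ 2)) x}).toReal -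
       Real.exp ε * ((gaussianReal b (Real.toNNReal (σ ^ 2))) {x : ℝ | Real.exp ε * gaussianPDFReal b (Real.toNNReal (σ ^ 2)) x ≤ gaussianPDFReal a (Real.toNNReal (σ ^ 2)) x}).toReal) := by
  set v := Real.toNNReal (σ ^ 2) with hv
  set B := {x : ℝ | Real.exp ε * gaussianPDFReal b v x ≤ gaussianPDFReal a v x} with hB
  have hBmeas : MeasurableSet B :=
    measurableSet_le (measurable_const.mul (measurable_gaussianPDFReal _ _))
      (measurable_gaussianPDFReal _ _)
  set h : ℝ → ℝ := fun x => gaussianPDFReal a v x - Real.exp ε * gaussianPDFReal b v x with hh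
  have hint : Integrable h := (integrable_gaussianPDFReal a v).sub
    ((integrable_gaussianPDFReal b v).const_mul _)
  have key : ∫ x in A, h x ≤ ∫ x in B, h x := by
    have hsplit : (∫ x in A ∩ B, h x) + ∫ x in A \ B, h x = ∫ x in A, h x :=
      integral_inter_add_diff hBmeas hint.integrableOn
    have h1 : ∫ x in A \ B, h x ≤ 0 := by
      refine setIntegral_nonpos (hA.diff hBmeas) fun x hx => ?_
      have : ¬ (Real.exp ε * gaussianPDFReal b v x ≤ gaussianPDFReal a v x) := hx.2
      simp only [hh]; linarith [not_le.mp this]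
    have h2 : ∫ x in A ∩ B, h x ≤ ∫ x in B, h x := by
      refine setIntegral_mono_set hint.integrableOn ?_ (HasSubset.Subset.eventuallyLE inter_subset_right)
      refine (ae_restrict_iff' hBmeas).mpr (ae_of_all _ fun x hx => ?_)
      have hx' : Real.exp ε * gaussianPDFReal b v x ≤ gaussianPDFReal a v x := hx
      simp only [Pi.zero_apply, hh]; linarith
    linarith
  have hint2 : ∀ S : Set ℝ, ∫ x in S, h x
      = (∫ x in S, gaussianPDFReal a v x) - Real.exp ε * ∫ x in S, gaussianPDFReal b v x := by
    intro S
    rw [hh]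
    rw [integral_sub ((integrable_gaussianPDFReal a v).integrableOn)
      (((integrable_gaussianPDFReal b v).const_mul _).integrableOn), integral_const_mul]
  rw [gauss_toReal hσ a A hA, gauss_toReal hσ b A hA, gauss_toReal hσ a B hBmeas,
    gauss_toReal hσ b B hBmeas]
  have := hint2 A
  have := hint2 B
  linarith [key]

lemma delta_nonneg {σ : ℝ} (hσ : 0 < σ) (ε a b : ℝ) :
    0 ≤ ((gaussianReal a (Real.toNNReal (σ ^ 2))) {x : ℝ | Real.exp ε * gaussianPDFReal b (Real.toNNReal (σ ^ 2)) x ≤ gaussianPDFReal a (Real.toNNReal (σ ^ 2)) x}).toReal -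
      Real.exp ε * ((gaussianReal b (Real.toNNReal (σ ^ 2))) {x : ℝ | Real.exp ε * gaussianPDFReal b (Real.toNNReal (σ ^ 2)) x ≤ gaussianPDFReal a (Real.toNNReal (σ ^ 2)) x}).toReal := by
  set v := Real.toNNReal (σ ^ 2) with hv
  set B := {x : ℝ | Real.exp ε * gaussianPDFReal b v x ≤ gaussianPDFReal a v x} with hB
  have hBmeas : MeasurableSet B :=
    measurableSet_le (measurable_const.mul (measurable_gaussianPDFReal _ _))
      (measurable_gaussianPDFReal _ _)
  rw [gauss_toReal hσ a B hBmeas, gauss_toReal hσ b B hBmeas, ← integral_const_mul,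
    ← integral_sub ((integrable_gaussianPDFReal a v).integrableOn)
      (((integrable_gaussianPDFReal b v).const_mul _).integrableOn)]
  refine setIntegral_nonneg hBmeas fun x hx => ?_
  have hx' : Real.exp ε * gaussianPDFReal b v x ≤ gaussianPDFReal a v x := hx
  linarith

lemma bSet_mem_iff {σ : ℝ} (hσ : 0 < σ) (ε a b x : ℝ) :
    (Real.exp ε * gaussianPDFReal b (Real.toNNReal (σ ^ 2)) x
      ≤ gaussianPDFReal a (Real.toNNReal (σ ^ 2)) x)
    ↔ 2 * σ ^ 2 * ε ≤ (a - b) * (2 * x - a - b) := by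
  have hvv : ((Real.toNNReal (σ ^ 2)) : ℝ) = σ ^ 2 := Real.coe_toNNReal _ (sq_nonneg σ)
  rw [gaussianPDFReal, gaussianPDFReal, hvv]
  have hK : 0 < (Real.sqrt (2 * Real.pi * σ ^ 2))⁻¹ := by positivity
  rw [mul_left_comm, mul_le_mul_iff_right₀ hK, ← Real.exp_add, Real.exp_le_exp]
  have h2σ : 0 < 2 * σ ^ 2 := by positivity
  rw [show ε + -(x - b) ^ 2 / (2 * σ ^ 2) = (2 * σ ^ 2 * ε + -(x - b) ^ 2) / (2 * σ ^ 2) by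
        field_simp,
    div_le_div_iff₀ h2σ h2σ]
  constructor <;> intro h <;> nlinarith

lemma delta_val {σ : ℝ} (hσ : 0 < σ) (ε a b : ℝ) (hab : a ≠ b) :
    ((gaussianReal a (Real.toNNReal (σ ^ 2))) {x : ℝ | Real.exp ε * gaussianPDFReal b (Real.toNNReal (σ ^ 2)) x ≤ gaussianPDFReal a (Real.toNNReal (σ ^ 2)) x}).toReal -
      Real.exp ε * ((gaussianReal b (Real.toNNReal (σ ^ 2))) {x : ℝ | Real.exp ε * gaussianPDFReal b (Real.toNNReal (σ ^ 2)) x ≤ gaussianPDFReal a (Real.toNNReal (σ ^ 2)) x}).toReal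
    = stdGaussCDF (-ε / (|a - b| / σ) + (|a - b| / σ) / 2)
      - Real.exp ε * stdGaussCDF (-ε / (|a - b| / σ) - (|a - b| / σ) / 2) := by
  set c := a - b with hc
  have hcne : c ≠ 0 := sub_ne_zero.mpr hab
  set T : ℝ := σ ^ 2 * ε / c + (a + b) / 2 with hT
  have hTc : T * c = σ ^ 2 * ε + (a + b) / 2 * c := by
    rw [hT, add_mul, div_mul_cancel₀ _ hcne]
  clear_value T c
  rcases hcne.lt_or_gt with hneg | hpos
  · -- c < 0 : B = Iic T
    have hB : {x : ℝ | Real.exp ε * gaussianPDFReal b (Real.toNNReal (σ ^ 2)) x ≤ gaussianPDFReal a (Real.toNNReal (σ ^ 2)) x} = Iic T := by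
      ext x
      rw [mem_setOf_eq, bSet_mem_iff hσ, mem_Iic, ← hc]
      constructor
      · intro h
        by_contra hx
        push_neg at hx
        have := mul_lt_mul_of_neg_left hx hneg
        linarith [hTc]
      · intro h
        have := mul_le_mul_of_nonpos_left h hneg.le
        linarith [hTc]
    have habs : |c| = -c := abs_of_neg hneg
    rw [hB, gauss_Iic a σ T hσ, gauss_Iic b σ T hσ, habs]
    have e1 : (T - a) / σ = -ε / (-c / σ) + (-c / σ) / 2 := by
      field_simp [hT]
      rw [hc]
      rw [hc] at hTc
      linear_combination (2:ℝ) * hTc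
    have e2 : (T - b) / σ = -ε / (-c / σ) - (-c / σ) / 2 := by
      field_simp [hT]
      rw [hc]
      rw [hc] at hTc
      linear_combination (2:ℝ) * hTc
    rw [e1, e2]
  · -- c > 0 : B = Ici T
    have hB : {x : ℝ | Real.exp ε * gaussianPDFReal b (Real.toNNReal (σ ^ 2)) x ≤ gaussianPDFReal a (Real.toNNReal (σ ^ 2)) x} = Ici T := by
      ext x
      rw [mem_setOf_eq, bSet_mem_iff hσ, mem_Ici, ← hc]
      constructor
      · intro h
        by_contra hx
        push_neg at hx
        have := mul_lt_mul_of_pos_left hx hpos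
        linarith [hTc]
      · intro h
        have := mul_le_mul_of_nonneg_left h hpos.le
        linarith [hTc]
    have habs : |c| = c := abs_of_pos hpos
    rw [hB, gauss_Ici a σ T hσ, gauss_Ici b σ T hσ, habs]
    have e1 : (a - T) / σ = -ε / (c / σ) + (c / σ) / 2 := by
      field_simp [hT]
      rw [hc]
      rw [hc] at hTc
      linear_combination (-2:ℝ) * hTc
    have e2 : (b - T) / σ = -ε / (c / σ) - (c / σ) / 2 := by
      field_simp [hT]
      rw [hc]
      rw [hc] at hTc
      linear_combination (-2:ℝ) * hTc
    rw [e1, e2]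

lemma gFun_hasDerivAt (ε : ℝ) {η : ℝ} (hη : 0 < η) :
    HasDerivAt (fun t => stdGaussCDF (-ε / t + t / 2) - Real.exp ε * stdGaussCDF (-ε / t - t / 2))
      (gaussianPDFReal 0 1 (-ε / η + η / 2)) η := by
  have hu1 : HasDerivAt (fun t : ℝ => -ε / t + t / 2) (-ε * -(η ^ 2)⁻¹ + 1 / 2) η := by
    have h1 : HasDerivAt (fun t : ℝ => -ε / t) (-ε * -(η ^ 2)⁻¹) η := by
      simpa [div_eq_mul_inv] using (hasDerivAt_inv hη.ne').const_mul (-ε)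
    exact h1.add ((hasDerivAt_id η).div_const 2)
  have hu2 : HasDerivAt (fun t : ℝ => -ε / t - t / 2) (-ε * -(η ^ 2)⁻¹ - 1 / 2) η := by
    have h1 : HasDerivAt (fun t : ℝ => -ε / t) (-ε * -(η ^ 2)⁻¹) η := by
      simpa [div_eq_mul_inv] using (hasDerivAt_inv hη.ne').const_mul (-ε)
    exact h1.sub ((hasDerivAt_id η).div_const 2)
  have hc1 := (hasDerivAt_stdGaussCDF (-ε / η + η / 2)).comp η hu1
  have hc2 := ((hasDerivAt_stdGaussCDF (-ε / η - η / 2)).comp η hu2).const_mul (Real.exp ε)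
  have h := hc1.sub hc2
  have hkey : Real.exp ε * gaussianPDFReal 0 1 (-ε / η - η / 2)
      = gaussianPDFReal 0 1 (-ε / η + η / 2) := by
    simp only [gaussianPDFReal, NNReal.coe_one, mul_one, sub_zero]
    rw [mul_left_comm, ← Real.exp_add]
    congr 2
    field_simp
    ring
  have heq : gaussianPDFReal 0 1 (-ε / η + η / 2) * (-ε * -(η ^ 2)⁻¹ + 1 / 2)
      - Real.exp ε * (gaussianPDFReal 0 1 (-ε / η - η / 2) * (-ε * -(η ^ 2)⁻¹ - 1 / 2))
      = gaussianPDFReal 0 1 (-ε / η + η / 2) := by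
    linear_combination (1 / 2 - -ε * -(η ^ 2)⁻¹) * hkey
  rw [← heq]
  exact h

lemma gFun_mono (ε : ℝ) {η₁ η₂ : ℝ} (h1 : 0 < η₁) (hle : η₁ ≤ η₂) :
    stdGaussCDF (-ε / η₁ + η₁ / 2) - Real.exp ε * stdGaussCDF (-ε / η₁ - η₁ / 2)
      ≤ stdGaussCDF (-ε / η₂ + η₂ / 2) - Real.exp ε * stdGaussCDF (-ε / η₂ - η₂ / 2) := by
  have h2 : (0:ℝ) < η₂ := lt_of_lt_of_le h1 hle
  have hmono : StrictMonoOn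
      (fun t => stdGaussCDF (-ε / t + t / 2) - Real.exp ε * stdGaussCDF (-ε / t - t / 2))
      (Ioi 0) := by
    refine strictMonoOn_of_deriv_pos (convex_Ioi 0) ?_ ?_
    · exact fun x hx => ((gFun_hasDerivAt ε hx).continuousAt).continuousWithinAt
    · intro x hx
      rw [interior_Ioi] at hx
      rw [(gFun_hasDerivAt ε hx).deriv]
      exact gaussianPDFReal_pos _ _ _ one_ne_zero
  exact hmono.monotoneOn h1 h2 hle

/-- The Gaussian output perturbation mechanism with noise standard deviation `σ = s/μ`
(`s` bounding the sensitivity `|a - b|`) is `(ε, δ(ε))`-DP for every `ε ≥ 0`, where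
`δ(ε) = Φ(-ε/μ + μ/2) - e^ε Φ(-ε/μ - μ/2)`. -/
theorem gaussian_mechanism_DP (μ s a b : ℝ) (hμ : 0 < μ) (hs : 0 < s)
    (hab : |a - b| ≤ s) (σ : ℝ) (hσ : σ = s / μ) :
    ∀ ε : ℝ, 0 ≤ ε → ∀ A : Set ℝ, MeasurableSet A →
      ((gaussianReal a (Real.toNNReal (σ ^ 2))) A).toReal ≤
        Real.exp ε * ((gaussianReal b (Real.toNNReal (σ ^ 2))) A).toReal +
        (stdGaussCDF (-ε / μ + μ / 2) - Real.exp ε * stdGaussCDF (-ε / μ - μ / 2)) := by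
  intro ε hε A hA
  have hσpos : 0 < σ := by rw [hσ]; positivity
  have hsσ : s / σ = μ := by
    rw [hσ]
    field_simp
  -- δ is nonnegative: it equals the bad-set value for the extreme pair (s, 0)
  have hδval : ((gaussianReal s (Real.toNNReal (σ ^ 2))) {x : ℝ | Real.exp ε * gaussianPDFReal 0 (Real.toNNReal (σ ^ 2)) x ≤ gaussianPDFReal s (Real.toNNReal (σ ^ 2)) x}).toReal -
      Real.exp ε * ((gaussianReal 0 (Real.toNNReal (σ ^ 2))) {x : ℝ | Real.exp ε * gaussianPDFReal 0 (Real.toNNReal (σ ^ 2)) x ≤ gaussianPDFReal s (Real.toNNReal (σ ^ 2)) x}).toReal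
      = stdGaussCDF (-ε / μ + μ / 2) - Real.exp ε * stdGaussCDF (-ε / μ - μ / 2) := by
    have h := delta_val hσpos ε s 0 hs.ne'
    rw [show |s - (0:ℝ)| = s by rw [sub_zero, abs_of_pos hs], hsσ] at h
    exact h
  have hδnonneg : 0 ≤ stdGaussCDF (-ε / μ + μ / 2) - Real.exp ε * stdGaussCDF (-ε / μ - μ / 2) := by
    rw [← hδval]
    exact delta_nonneg hσpos ε s 0
  by_cases hab' : a = b
  · subst hab'
    have h1 : ((gaussianReal a (Real.toNNReal (σ ^ 2))) A).toReal
        ≤ Real.exp ε * ((gaussianReal a (Real.toNNReal (σ ^ 2))) A).toReal := by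
      nlinarith [Real.one_le_exp hε, ENNReal.toReal_nonneg (a := (gaussianReal a (Real.toNNReal (σ ^ 2))) A)]
    linarith
  · have hcore := core_ineq hσpos ε a b A hA
    have hval := delta_val hσpos ε a b hab'
    have habpos : 0 < |a - b| := abs_pos.mpr (sub_ne_zero.mpr hab')
    have hη : |a - b| / σ ≤ μ := by
      rw [← hsσ]
      gcongr
    have hmono := gFun_mono ε (div_pos habpos hσpos) hη
    rw [hval] at hcore
    linarith
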